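/- For every ρ > 0 and every z ∈ ℝ, the quantity e^{2ν}(ρ,z) := (1/A)·(A + Σ_{i=1}^r a_i·d_i)·( (Σ a_i/d_i)·(A + Σ a_i·d_i) − ( (Σ a_i·(z − z_i)/d_i)² + (Σ a_i·ρ/d_i)² ) ) is strictly positive. -/

import Mathlib

open Finset

/-- The distance `d_i(ρ,z) = (ρ² + (z − z_i)²)^{1/2}`. -/
noncomputable def dd {r : ℕ} (zs : Fin r → ℝ) (ρ z : ℝ) (i : Fin r) : ℝ :=
  Real.sqrt (ρ ^ 2 + (z - zs i) ^ 2)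

theorem statement6 {r : ℕ} (hr : 1 ≤ r) (A : ℝ) (hA : 0 < A)
    (zs a : Fin r → ℝ)
    (hz : ∀ i j : Fin r, i < j → zs i < zs j)
    (ha : ∀ i, 0 < a i) (hsum : ∑ i, a i = 1)
    (ρ z : ℝ) (hρ : 0 < ρ) :
    0 < (1 / A) * (A + ∑ i, a i * dd zs ρ z i) *
      ((∑ i, a i / dd zs ρ z i) * (A + ∑ i, a i * dd zs ρ z i) -
        ((∑ i, a i * (z - zs i) / dd zs ρ z i) ^ 2 +
          (∑ i, a i * ρ / dd zs ρ z i) ^ 2)) := by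
  set d := dd zs ρ z with hd
  have hdpos : ∀ i, 0 < d i := fun i => Real.sqrt_pos.2 (by positivity)
  have hd2 : ∀ i, d i ^ 2 = ρ ^ 2 + (z - zs i) ^ 2 := fun i =>
    Real.sq_sqrt (by positivity)
  have hne : Finset.univ.Nonempty (α := Fin r) := by
    have : Nonempty (Fin r) := Fin.pos_iff_nonempty.1 hr
    exact Finset.univ_nonempty
  -- X² ≤ ∑ a i (z - zs i)² / d i ²
  have hX : (∑ i, a i * (z - zs i) / d i) ^ 2 ≤
      ∑ i, a i * (z - zs i) ^ 2 / d i ^ 2 := by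
    have h := Finset.sum_mul_sq_le_sq_mul_sq Finset.univ
      (fun i => Real.sqrt (a i)) (fun i => Real.sqrt (a i) * (z - zs i) / d i)
    have e1 : ∀ i : Fin r, Real.sqrt (a i) * (Real.sqrt (a i) * (z - zs i) / d i)
        = a i * (z - zs i) / d i := by
      intro i
      rw [mul_div_assoc', ← mul_assoc, Real.mul_self_sqrt (ha i).le]
    have e2 : ∀ i : Fin r, Real.sqrt (a i) ^ 2 = a i := fun i =>
      Real.sq_sqrt (ha i).le
    have e3 : ∀ i : Fin r, (Real.sqrt (a i) * (z - zs i) / d i) ^ 2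
        = a i * (z - zs i) ^ 2 / d i ^ 2 := by
      intro i
      rw [div_pow, mul_pow, e2]
    simp only [e1, e2, e3] at h
    calc (∑ i, a i * (z - zs i) / d i) ^ 2
        ≤ (∑ i, a i) * ∑ i, a i * (z - zs i) ^ 2 / d i ^ 2 := h
      _ = ∑ i, a i * (z - zs i) ^ 2 / d i ^ 2 := by rw [hsum, one_mul]
  have hY : (∑ i, a i * ρ / d i) ^ 2 ≤ ∑ i, a i * ρ ^ 2 / d i ^ 2 := by
    have h := Finset.sum_mul_sq_le_sq_mul_sq Finset.univ
      (fun i => Real.sqrt (a i)) (fun i => Real.sqrt (a i) * ρ / d i)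
    have e1 : ∀ i : Fin r, Real.sqrt (a i) * (Real.sqrt (a i) * ρ / d i)
        = a i * ρ / d i := by
      intro i
      rw [mul_div_assoc', ← mul_assoc, Real.mul_self_sqrt (ha i).le]
    have e2 : ∀ i : Fin r, Real.sqrt (a i) ^ 2 = a i := fun i =>
      Real.sq_sqrt (ha i).le
    have e3 : ∀ i : Fin r, (Real.sqrt (a i) * ρ / d i) ^ 2
        = a i * ρ ^ 2 / d i ^ 2 := by
      intro i
      rw [div_pow, mul_pow, e2]
    simp only [e1, e2, e3] at h
    calc (∑ i, a i * ρ / d i) ^ 2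
        ≤ (∑ i, a i) * ∑ i, a i * ρ ^ 2 / d i ^ 2 := h
      _ = ∑ i, a i * ρ ^ 2 / d i ^ 2 := by rw [hsum, one_mul]
  -- X² + Y² ≤ 1
  have hXY : (∑ i, a i * (z - zs i) / d i) ^ 2 + (∑ i, a i * ρ / d i) ^ 2 ≤ 1 := by
    have : (∑ i, a i * (z - zs i) ^ 2 / d i ^ 2) + ∑ i, a i * ρ ^ 2 / d i ^ 2
        = 1 := by
      rw [← Finset.sum_add_distrib, ← hsum]
      refine Finset.sum_congr rfl fun i _ => ?_
      rw [← add_div, ← mul_add, add_comm ((z - zs i) ^ 2), ← hd2 i,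
        mul_div_assoc, div_self (pow_ne_zero 2 (hdpos i).ne'), mul_one]
    linarith [hX, hY]
  -- T S ≥ 1
  have hTS : 1 ≤ (∑ i, a i / d i) * ∑ i, a i * d i := by
    have h := Finset.sum_mul_sq_le_sq_mul_sq Finset.univ
      (fun i => Real.sqrt (a i / d i)) (fun i => Real.sqrt (a i * d i))
    have e1 : ∀ i : Fin r, Real.sqrt (a i / d i) * Real.sqrt (a i * d i) = a i := by
      intro i
      rw [← Real.sqrt_mul (div_pos (ha i) (hdpos i)).le]
      have : a i / d i * (a i * d i) = a i ^ 2 := by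
        field_simp [(hdpos i).ne']
      rw [this, Real.sqrt_sq (ha i).le]
    have e2 : ∀ i : Fin r, Real.sqrt (a i / d i) ^ 2 = a i / d i := fun i =>
      Real.sq_sqrt (div_pos (ha i) (hdpos i)).le
    have e3 : ∀ i : Fin r, Real.sqrt (a i * d i) ^ 2 = a i * d i := fun i =>
      Real.sq_sqrt (mul_pos (ha i) (hdpos i)).le
    simp only [e1, e2, e3] at h
    rw [hsum, one_pow] at h
    exact h
  have hT : 0 < ∑ i, a i / d i :=
    Finset.sum_pos (fun i _ => div_pos (ha i) (hdpos i)) hne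
  have hS : 0 < ∑ i, a i * d i :=
    Finset.sum_pos (fun i _ => mul_pos (ha i) (hdpos i)) hne
  have key : (∑ i, a i * (z - zs i) / d i) ^ 2 + (∑ i, a i * ρ / d i) ^ 2 <
      (∑ i, a i / d i) * (A + ∑ i, a i * d i) := by
    have : (∑ i, a i / d i) * (A + ∑ i, a i * d i)
        = (∑ i, a i / d i) * A + (∑ i, a i / d i) * ∑ i, a i * d i := by ring
    nlinarith [mul_pos hT hA]
  have h1 : 0 < (1 / A) * (A + ∑ i, a i * d i) := by positivity
  exact mul_pos h1 (by linarith)
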